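/- Let C be a convex body in ℝ^d, d ≥ 2. If P is a generalized billiard trajectory of C, then P cannot be translated into the interior of C; that is, there is no t ∈ ℝ^d with t + {p_1, …, p_n} ⊆ int C, where p_1, …, p_n are the vertices of P. -/

import Mathlib

open scoped RealInnerProductSpace

noncomputable section

/-- A closed polygonal path in `ℝ^d` with `n` sides, encoded as an `n`-periodic
sequence of vertices indexed by `ℤ`, with consecutive vertices distinct. -/
def IsClosedPolygonalPath {d : ℕ} (n : ℕ) (p : ℤ → EuclideanSpace ℝ (Fin d)) : Prop :=
  2 ≤ n ∧ (∀ i : ℤ, p (i + (n : ℤ)) = p i) ∧ (∀ i : ℤ, p i ≠ p (i + 1))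

/-- The (non-normalized) inner angle bisector direction of the path `p` at the vertex `p i`. -/
def bisector {d : ℕ} (p : ℤ → EuclideanSpace ℝ (Fin d)) (i : ℤ) : EuclideanSpace ℝ (Fin d) :=
  ‖p (i - 1) - p i‖⁻¹ • (p (i - 1) - p i) + ‖p (i + 1) - p i‖⁻¹ • (p (i + 1) - p i)

/-- `p` is an `n`-periodic generalized billiard trajectory of `C`: all vertices lie on the
boundary of `C` and at each vertex the inner angle bisector is a nonzero inward normal of a
hyperplane supporting `C` at that vertex. -/
def IsGenBilliardTraj {d : ℕ} (C : Set (EuclideanSpace ℝ (Fin d))) (n : ℕ)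
    (p : ℤ → EuclideanSpace ℝ (Fin d)) : Prop :=
  IsClosedPolygonalPath n p ∧
    ∀ i : ℤ, p i ∈ frontier C ∧ bisector p i ≠ 0 ∧
      ∀ q ∈ C, 0 ≤ ⟪bisector p i, q - p i⟫

/-- The length of the closed polygonal path with vertices `p 0, p 1, …, p (n-1)`. -/
def pathLength {d : ℕ} (n : ℕ) (p : ℤ → EuclideanSpace ℝ (Fin d)) : ℝ :=
  ∑ i ∈ Finset.range n, ‖p ((i : ℤ) + 1) - p (i : ℤ)‖

/-- A generalized billiard trajectory of a convex body `C` cannot be translated into the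
interior of `C`. -/
theorem gen_billiard_traj_not_translatable_into_interior
    {d : ℕ} (hd : 2 ≤ d) (C : Set (EuclideanSpace ℝ (Fin d)))
    (hCc : IsCompact C) (hCconv : Convex ℝ C) (hCint : (interior C).Nonempty)
    (n : ℕ) (p : ℤ → EuclideanSpace ℝ (Fin d)) (hp : IsGenBilliardTraj C n p) :
    ¬ ∃ t : EuclideanSpace ℝ (Fin d), ∀ i : ℤ, t + p i ∈ interior C := by
  rintro ⟨t, ht⟩
  obtain ⟨⟨hn2, hper, _⟩, hbil⟩ := hp
  -- unit direction vectors
  set u : ℤ → EuclideanSpace ℝ (Fin d) :=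
    fun i => ‖p (i + 1) - p i‖⁻¹ • (p (i + 1) - p i) with hu
  have hbu : ∀ i : ℤ, bisector p i = u i - u (i - 1) := by
    intro i
    have h1 : i - 1 + 1 = i := by ring
    simp only [bisector, hu, h1]
    rw [← neg_sub (p i) (p (i - 1)), norm_neg, smul_neg]
    abel
  have huper : ∀ i : ℤ, u (i + n) = u i := by
    intro i
    simp only [hu]
    rw [show i + (n : ℤ) + 1 = (i + 1) + n by ring, hper, hper]
  -- each inner product with t is positive
  have hpos : ∀ i : ℤ, 0 < ⟪bisector p i, t⟫ := by
    intro i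
    obtain ⟨-, hb, hsup⟩ := hbil i
    obtain ⟨ε, hε, hball⟩ := Metric.mem_nhds_iff.mp (isOpen_interior.mem_nhds (ht i))
    set b := bisector p i with hbdef
    have hbn : 0 < ‖b‖ := norm_pos_iff.mpr hb
    set δ : ℝ := ε / (2 * ‖b‖) with hδ
    have hδpos : 0 < δ := by positivity
    have hqball : t + p i - δ • b ∈ Metric.ball (t + p i) ε := by
      rw [Metric.mem_ball, dist_eq_norm]
      have : t + p i - δ • b - (t + p i) = -(δ • b) := by abel
      rw [this, norm_neg, norm_smul, Real.norm_eq_abs, abs_of_pos hδpos]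
      have h2 : δ * ‖b‖ = ε / 2 := by
        rw [hδ]; field_simp
      linarith
    have hqC : t + p i - δ • b ∈ C := interior_subset (hball hqball)
    have h0 := hsup _ hqC
    have heq : (t + p i - δ • b) - p i = t - δ • b := by abel
    rw [heq, inner_sub_right, real_inner_smul_right, real_inner_self_eq_norm_sq] at h0
    nlinarith [mul_pos hδpos (pow_pos hbn 2)]
  -- sum of bisectors over one period is zero
  have hsum : ∑ i ∈ Finset.range n, bisector p (i : ℤ) = 0 := by
    have hcon : ∀ k : ℕ, bisector p (k : ℤ)
        = u ((((k + 1) : ℕ) : ℤ) - 1) - u ((k : ℤ) - 1) := by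
      intro k
      rw [hbu]
      congr 2
      push_cast
      ring
    rw [Finset.sum_congr rfl (fun k _ => hcon k)]
    rw [show (∑ k ∈ Finset.range n, (u (((k + 1 : ℕ) : ℤ) - 1) - u ((k : ℤ) - 1)))
        = u (((n : ℕ) : ℤ) - 1) - u (((0 : ℕ) : ℤ) - 1) from
      Finset.sum_range_sub (fun k : ℕ => u ((k : ℤ) - 1)) n]
    rw [show ((n : ℤ)) - 1 = -1 + n by ring, huper]
    norm_num
  have hne : (Finset.range n).Nonempty := Finset.nonempty_range_iff.mpr (by omega)
  have hpos' : 0 < ∑ i ∈ Finset.range n, ⟪bisector p (i : ℤ), t⟫ :=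
    Finset.sum_pos (fun i _ => hpos i) hne
  rw [← sum_inner, hsum, inner_zero_left] at hpos'
  exact lt_irrefl 0 hpos'
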